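/- arXiv:1612.02569 — 2 statements merged into one kernel-verified Lean document; each statement's English description precedes it below -/
import Mathlib

section
/- Let X₁, …, X_n be a family of {0,1}-valued random variables such that both (X_i)_{i=1}^n and (1 − X_i)_{i=1}^n are negatively correlated, i.e. for every subset S ⊆ {1,…,n}, E[∏_{i∈S} X_i] ≤ ∏_{i∈S} E[X_i] and E[∏_{i∈S} (1 − X_i)] ≤ ∏_{i∈S} E[1 − X_i]. Let p_i = P[X_i = 1] and p = (1/n) ∑_{i=1}^n p_i. Then for every λ > 0, P[∑_{i=1}^n X_i < p·n − λ] ≤ exp(−λ² / (2 p n)). -/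
open MeasureTheory


lemma exp_neg_le_quadratic (t : ℝ) (ht : 0 ≤ t) : Real.exp (-t) ≤ 1 - t + t^2/2 := by
  have h3 : 1 + t + t^2/2 ≤ Real.exp t := by
    have := Real.sum_le_exp_of_nonneg ht 3
    simp [Finset.sum_range_succ, Nat.factorial] at this
    linarith
  have hE := Real.exp_pos t
  rw [Real.exp_neg, inv_eq_one_div, div_le_iff₀ hE]
  nlinarith [sq_nonneg (t*t), sq_nonneg t]


/-- **Chernoff lower-tail bound for negatively correlated `{0,1}`-valued random
variables.**  Let `X 1, …, X n` be `{0,1}`-valued random variables such that both the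
family `(X i)` and the family `(1 - X i)` are negatively correlated, i.e. for every
subset `S ⊆ {1,…,n}`, `E[∏ i ∈ S, X i] ≤ ∏ i ∈ S, E[X i]` and
`E[∏ i ∈ S, (1 - X i)] ≤ ∏ i ∈ S, E[1 - X i]`.  Let `p i = P[X i = 1]` and
`p = (1/n) ∑ i, p i`.  Then for every `λ > 0`,
`P[∑ i, X i < p·n − λ] ≤ exp(−λ² / (2 p n))`. -/
theorem chernoff_negatively_correlated
    {Ω : Type*} [MeasurableSpace Ω] (μ : Measure Ω) [IsProbabilityMeasure μ]
    (n : ℕ) (hn : 0 < n) (X : Fin n → Ω → ℝ)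
    (hmeas : ∀ i, Measurable (X i))
    (h01 : ∀ i ω, X i ω = 0 ∨ X i ω = 1)
    (hneg : ∀ S : Finset (Fin n),
      (∫ ω, ∏ i ∈ S, X i ω ∂μ) ≤ ∏ i ∈ S, ∫ ω, X i ω ∂μ)
    (hneg' : ∀ S : Finset (Fin n),
      (∫ ω, ∏ i ∈ S, (1 - X i ω) ∂μ) ≤ ∏ i ∈ S, ∫ ω, (1 - X i ω) ∂μ)
    (p : ℝ) (hp : p = (1 / (n : ℝ)) * ∑ i, (μ {ω | X i ω = 1}).toReal)
    (lam : ℝ) (hlam : 0 < lam) :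
    (μ {ω | ∑ i, X i ω < p * n - lam}).toReal ≤ Real.exp (-lam ^ 2 / (2 * p * n)) := by
  -- basic pointwise facts
  have hXnn : ∀ i ω, 0 ≤ X i ω := fun i ω => by rcases h01 i ω with h | h <;> simp [h]
  have hXle : ∀ i ω, X i ω ≤ 1 := fun i ω => by rcases h01 i ω with h | h <;> simp [h]
  -- integrability of each X i
  have hint : ∀ i, Integrable (X i) μ := by
    intro i
    refine (integrable_const (1 : ℝ)).mono' (hmeas i).aestronglyMeasurable ?_
    filter_upwards with ω
    rw [Real.norm_eq_abs, abs_of_nonneg (hXnn i ω)]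
    exact hXle i ω
  -- expectation of X i equals the probability p_i
  have hpi : ∀ i, ∫ ω, X i ω ∂μ = (μ {ω | X i ω = 1}).toReal := by
    intro i
    have heq : (fun ω => X i ω) = Set.indicator {ω | X i ω = 1} (fun _ => (1 : ℝ)) := by
      funext ω
      rcases h01 i ω with h | h <;> simp [Set.indicator_apply, h]
    have hms : MeasurableSet {ω | X i ω = 1} := (hmeas i) (measurableSet_singleton 1)
    calc ∫ ω, X i ω ∂μ = ∫ ω, Set.indicator {ω | X i ω = 1} (fun _ => (1 : ℝ)) ω ∂μ := by
          rw [heq]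
      _ = (μ {ω | X i ω = 1}).toReal • (1 : ℝ) := integral_indicator_const (1 : ℝ) hms
      _ = (μ {ω | X i ω = 1}).toReal := by simp
  have hq0 : ∀ i, 0 ≤ ∫ ω, X i ω ∂μ := fun i =>
    integral_nonneg (fun ω => hXnn i ω)
  have hq1 : ∀ i, ∫ ω, X i ω ∂μ ≤ 1 := by
    intro i
    calc ∫ ω, X i ω ∂μ ≤ ∫ _, (1:ℝ) ∂μ := integral_mono (hint i) (integrable_const 1)
          (fun ω => hXle i ω)
      _ = 1 := by simp
  -- p ≥ 0, and sum of expectations equals p*n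
  have hnR : (0:ℝ) < n := Nat.cast_pos.mpr hn
  have hpsum : ∑ i, ∫ ω, X i ω ∂μ = p * n := by
    rw [hp]
    field_simp
    exact Finset.sum_congr rfl fun i _ => hpi i
  have hp0 : 0 ≤ p := by
    have : 0 ≤ ∑ i, ∫ ω, X i ω ∂μ := Finset.sum_nonneg fun i _ => hq0 i
    rw [hpsum] at this
    nlinarith
  -- trivial case p = 0
  rcases eq_or_lt_of_le hp0 with hpz | hppos
  · have h2 : (2 : ℝ) * p * n = 0 := by rw [← hpz]; ring
    rw [h2, div_zero, Real.exp_zero]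
    calc (μ {ω | ∑ i, X i ω < p * n - lam}).toReal ≤ (μ Set.univ).toReal :=
          ENNReal.toReal_mono (measure_ne_top μ _) (measure_mono (Set.subset_univ _))
      _ = 1 := by simp
  -- main case p > 0
  have hpn : (0:ℝ) < p * n := mul_pos hppos hnR
  set t : ℝ := lam / (p * n) with ht_def
  have ht : 0 < t := div_pos hlam hpn
  have hts : t * (p * n) = lam := div_mul_cancel₀ lam hpn.ne'
  set a : ℝ := Real.exp (-t) with ha_def
  have ha : 0 < a := Real.exp_pos _
  set b : ℝ := 1 - a with hb_def
  have hb : 0 ≤ b := by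
    have : a ≤ 1 := Real.exp_le_one_iff.mpr (by linarith)
    simp [hb_def]; linarith
  have hab : a + b = 1 := by simp [hb_def]
  -- the tilted variable Z
  set Z : Ω → ℝ := fun ω => Real.exp (-t * ∑ i, X i ω) with hZ_def
  have hsummeas : Measurable fun ω => ∑ i, X i ω :=
    Finset.measurable_sum _ fun i _ => hmeas i
  have hZmeas : Measurable Z := Real.measurable_exp.comp (measurable_const.mul hsummeas)
  have hZnn : ∀ ω, 0 ≤ Z ω := fun ω => (Real.exp_pos _).le
  have hZle1 : ∀ ω, Z ω ≤ 1 := by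
    intro ω
    apply Real.exp_le_one_iff.mpr
    have : 0 ≤ ∑ i, X i ω := Finset.sum_nonneg fun i _ => hXnn i ω
    nlinarith
  have hZint : Integrable Z μ := by
    refine (integrable_const (1 : ℝ)).mono' hZmeas.aestronglyMeasurable ?_
    filter_upwards with ω
    rw [Real.norm_eq_abs, abs_of_nonneg (hZnn ω)]
    exact hZle1 ω
  -- pointwise factorization of Z
  have hZfact : ∀ ω, Z ω = ∏ i, (b * (1 - X i ω) + a) := by
    intro ω
    rw [hZ_def]
    simp only [Finset.mul_sum, Real.exp_sum]
    refine Finset.prod_congr rfl fun i _ => ?_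
    rcases h01 i ω with h | h <;> simp [h, hb_def] <;> ring
  -- integral of 1 - X i
  have hEq : ∀ i, ∫ ω, (1 - X i ω) ∂μ = 1 - ∫ ω, X i ω ∂μ := by
    intro i
    rw [integral_sub (integrable_const 1) (hint i)]
    simp
  -- integrability of products
  have hYint : ∀ S : Finset (Fin n), Integrable (fun ω => ∏ i ∈ S, (1 - X i ω)) μ := by
    intro S
    have hm : Measurable fun ω => ∏ i ∈ S, (1 - X i ω) :=
      Finset.measurable_prod _ fun i _ => measurable_const.sub (hmeas i)
    refine (integrable_const (1 : ℝ)).mono' hm.aestronglyMeasurable ?_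
    filter_upwards with ω
    rw [Real.norm_eq_abs, abs_of_nonneg (Finset.prod_nonneg fun i _ => by
      have := hXle i ω; linarith)]
    exact Finset.prod_le_one (fun i _ => by have := hXle i ω; linarith)
      (fun i _ => by have := hXnn i ω; linarith)
  -- negative correlation in terms of expectations of X
  have key : ∀ S : Finset (Fin n),
      ∫ ω, ∏ i ∈ S, (1 - X i ω) ∂μ ≤ ∏ i ∈ S, (1 - ∫ ω, X i ω ∂μ) := by
    intro S
    calc ∫ ω, ∏ i ∈ S, (1 - X i ω) ∂μ ≤ ∏ i ∈ S, ∫ ω, (1 - X i ω) ∂μ := hneg' S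
      _ = ∏ i ∈ S, (1 - ∫ ω, X i ω ∂μ) := Finset.prod_congr rfl fun i _ => hEq i
  -- the crucial MGF bound via multilinear expansion
  have hEZ : ∫ ω, Z ω ∂μ ≤ ∏ i, (b * (1 - ∫ ω, X i ω ∂μ) + a) := by
    calc ∫ ω, Z ω ∂μ
        = ∫ ω, ∑ S ∈ Finset.univ.powerset,
            b ^ S.card * (∏ i ∈ S, (1 - X i ω)) * a ^ (Finset.univ \ S).card ∂μ := by
          refine integral_congr_ae (Filter.Eventually.of_forall fun ω => ?_)
          rw [hZfact ω, Finset.prod_add]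
          refine Finset.sum_congr rfl fun S _ => ?_
          rw [Finset.prod_mul_distrib, Finset.prod_const, Finset.prod_const]
      _ = ∑ S ∈ Finset.univ.powerset,
            b ^ S.card * (∫ ω, ∏ i ∈ S, (1 - X i ω) ∂μ) * a ^ (Finset.univ \ S).card := by
          rw [integral_finset_sum _ fun S _ =>
            (((hYint S).const_mul _).mul_const _)]
          refine Finset.sum_congr rfl fun S _ => ?_
          rw [integral_mul_const, integral_const_mul]
      _ ≤ ∑ S ∈ Finset.univ.powerset,
            b ^ S.card * (∏ i ∈ S, (1 - ∫ ω, X i ω ∂μ)) * a ^ (Finset.univ \ S).card := by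
          refine Finset.sum_le_sum fun S _ => ?_
          exact mul_le_mul_of_nonneg_right
            (mul_le_mul_of_nonneg_left (key S) (pow_nonneg hb _))
            (pow_nonneg ha.le _)
      _ = ∏ i, (b * (1 - ∫ ω, X i ω ∂μ) + a) := by
          rw [Finset.prod_add]
          refine Finset.sum_congr rfl fun S _ => ?_
          rw [Finset.prod_mul_distrib, Finset.prod_const, Finset.prod_const]
  -- bound the product by an exponential
  have hprod : ∏ i, (b * (1 - ∫ ω, X i ω ∂μ) + a) ≤ Real.exp (-(b * (p * n))) := by
    calc ∏ i, (b * (1 - ∫ ω, X i ω ∂μ) + a)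
        ≤ ∏ i, Real.exp (-(b * ∫ ω, X i ω ∂μ)) := by
          refine Finset.prod_le_prod (fun i _ => ?_) (fun i _ => ?_)
          · have h1 := hq1 i
            have h2 := hq0 i
            nlinarith
          · have := Real.add_one_le_exp (-(b * ∫ ω, X i ω ∂μ))
            linarith [hab]
      _ = Real.exp (∑ i, -(b * ∫ ω, X i ω ∂μ)) := (Real.exp_sum _ _).symm
      _ = Real.exp (-(b * (p * n))) := by
          rw [Finset.sum_neg_distrib, ← Finset.mul_sum, hpsum]
  -- Markov's inequality
  set c : ℝ := p * n - lam with hc_def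
  set ε : ℝ := Real.exp (-t * c) with hε_def
  have hεpos : 0 < ε := Real.exp_pos _
  have hsub : {ω | ∑ i, X i ω < c} ⊆ {ω | ε ≤ Z ω} := by
    intro ω hω
    simp only [Set.mem_setOf_eq] at hω ⊢
    apply Real.exp_le_exp.mpr
    nlinarith
  have hZint_nn : 0 ≤ ∫ ω, Z ω ∂μ := integral_nonneg hZnn
  have hmark := mul_meas_ge_le_integral_of_nonneg
    (Filter.Eventually.of_forall hZnn) hZint ε
  have hm1 : (μ {ω | ∑ i, X i ω < c}).toReal ≤ (μ {ω | ε ≤ Z ω}).toReal :=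
    ENNReal.toReal_mono (measure_ne_top μ _) (measure_mono hsub)
  have hm2 : (μ {ω | ∑ i, X i ω < c}).toReal ≤ (∫ ω, Z ω ∂μ) / ε := by
    rw [le_div_iff₀ hεpos]
    have hnn : (0:ℝ) ≤ (μ {ω | ∑ i, X i ω < c}).toReal := ENNReal.toReal_nonneg
    rw [measureReal_def] at hmark
    nlinarith
  -- put everything together
  have hexp := exp_neg_le_quadratic t ht.le
  calc (μ {ω | ∑ i, X i ω < c}).toReal
      ≤ (∫ ω, Z ω ∂μ) / ε := hm2
    _ ≤ Real.exp (-(b * (p * n))) / ε := by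
        exact div_le_div_of_nonneg_right (le_trans hEZ hprod) hεpos.le
    _ = Real.exp (-(b * (p * n)) + t * c) := by
        rw [hε_def, ← Real.exp_sub]
        congr 1
        ring
    _ ≤ Real.exp (-lam ^ 2 / (2 * p * n)) := by
        apply Real.exp_le_exp.mpr
        have hrhs : -lam ^ 2 / (2 * p * n) = -(lam * t) / 2 := by
          rw [ht_def]; field_simp
        rw [hrhs, hc_def]
        have hsa : (p * n) * a ≤ (p * n) * (1 - t + t^2/2) :=
          mul_le_mul_of_nonneg_left hexp hpn.le
        nlinarith [hts]
end

section
/- For each natural number a with 1 ≤ a ≤ n/ln n, the number of cuts A of a spanning tree of an n-vertex graph whose edge boundary in the tree has size a is at most C(n−1, a), and consequently ∑_{a=1}^{n/ln(n)} C(n−1, a) · exp(−(k−1) α a ln(n) p/8) ≤ ∑_{a=1}^{n/ln(n)} exp( a ( ln(e/a) + ln(n)(1 − (k−1) α p / 8) ) ), which is o(1) as n → ∞ whenever (k−1)α > 8/p. -/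
open scoped Classical

/-- The edge boundary `∂_H A` of a vertex set `A` within an edge set `H`. -/
noncomputable def eBoundary {V : Type*} [DecidableEq V]
    (A : Finset V) (H : Finset (Sym2 V)) : Finset (Sym2 V) :=
  H.filter (fun a => ∃ u v, a = s(u, v) ∧ u ∈ A ∧ v ∉ A)

/-- The binomial coefficient bound `C(m, a) ≤ (n e / a)^a`-style estimate, in
exponential form. -/
lemma choose_le_exp_aux (n a : ℕ) (ha : 1 ≤ a) :
    ((n - 1).choose a : ℝ) ≤
      Real.exp ((a : ℝ) * (Real.log (Real.exp 1 / (a : ℝ)) + Real.log n)) := by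
  rcases Nat.eq_zero_or_pos n with rfl | hn
  · simp only [Nat.zero_sub, Nat.choose_eq_zero_of_lt (by omega : (0:ℕ) - 1 < a),
      Nat.cast_zero]
    positivity
  have ha0 : (0 : ℝ) < (a : ℝ) := by exact_mod_cast ha
  have hn0 : (0 : ℝ) < (n : ℝ) := by exact_mod_cast hn
  have h1 : ((n - 1).choose a : ℝ) ≤ ((n : ℝ) ^ a) / (a.factorial : ℝ) := by
    refine (Nat.choose_le_pow_div a (n - 1)).trans ?_
    gcongr
    exact_mod_cast Nat.sub_le n 1
  have h2 : (a : ℝ) ^ a / (a.factorial : ℝ) ≤ Real.exp a :=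
    Real.pow_div_factorial_le_exp (a : ℝ) ha0.le a
  have hfac : (0 : ℝ) < (a.factorial : ℝ) := by exact_mod_cast a.factorial_pos
  have h3 : (1 : ℝ) / (a.factorial : ℝ) ≤ Real.exp a / (a : ℝ) ^ a := by
    rw [div_le_div_iff₀ hfac (by positivity), one_mul]
    rw [div_le_iff₀ hfac] at h2
    linarith [h2]
  have h4 : ((n - 1).choose a : ℝ) ≤ (n : ℝ) ^ a * (Real.exp a / (a : ℝ) ^ a) := by
    calc ((n - 1).choose a : ℝ) ≤ ((n : ℝ) ^ a) / (a.factorial : ℝ) := h1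
      _ = (n : ℝ) ^ a * (1 / (a.factorial : ℝ)) := by ring
      _ ≤ (n : ℝ) ^ a * (Real.exp a / (a : ℝ) ^ a) := by gcongr
  refine h4.trans (le_of_eq ?_)
  rw [mul_add, Real.exp_add, Real.exp_nat_mul, Real.exp_nat_mul,
    Real.exp_log (by positivity : (0:ℝ) < Real.exp 1 / (a : ℝ)),
    Real.exp_log hn0, div_pow, Real.exp_one_pow]
  ring

/-- **Union bound over bad cuts.**  For each `1 ≤ a ≤ n/ln n`, the number of cuts of a
spanning tree of an `n`-vertex graph whose edge boundary in the tree has size `a`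
(cuts being identified with their edge boundary in the tree) is at most `C(n−1, a)`;
consequently
`∑_{a=1}^{n/ln n} C(n−1, a) · exp(−(k−1) α a ln(n) p/8)
  ≤ ∑_{a=1}^{n/ln n} exp( a ( ln(e/a) + ln(n)(1 − (k−1) α p / 8) ) )`,
which is `o(1)` as `n → ∞` whenever `(k−1)α > 8/p`. -/
theorem bad_cuts_union_bound
    (k : ℕ) (α p : ℝ) (hα : 0 < α) (hp0 : 0 < p) (hp1 : p ≤ 1) :
    -- the number of cuts of an `n`-vertex tree with tree-boundary of size `a`
    -- is at most `C(n-1, a)`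
    (∀ (n : ℕ) (V : Type) [Fintype V] [DecidableEq V],
      Fintype.card V = n →
      ∀ (T : SimpleGraph V), T.IsTree →
      ∀ a : ℕ, 1 ≤ a → (a : ℝ) ≤ (n : ℝ) / Real.log n →
        (((Finset.univ : Finset (Finset V)).image
            (fun A => eBoundary A T.edgeFinset)).filter
          (fun S => S.card = a)).card ≤ Nat.choose (n - 1) a) ∧
    -- the union-bound sum is dominated by the exponential sum
    (∀ n : ℕ, 2 ≤ n →
      ∑ a ∈ Finset.Icc 1 ⌊(n : ℝ) / Real.log n⌋₊,
          (Nat.choose (n - 1) a : ℝ) *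
            Real.exp (-((k : ℝ) - 1) * α * (a : ℝ) * Real.log n * p / 8) ≤
        ∑ a ∈ Finset.Icc 1 ⌊(n : ℝ) / Real.log n⌋₊,
          Real.exp ((a : ℝ) * (Real.log (Real.exp 1 / (a : ℝ)) +
            Real.log n * (1 - ((k : ℝ) - 1) * α * p / 8)))) ∧
    -- and it is `o(1)` as `n → ∞` whenever `(k−1)α > 8/p`
    (((k : ℝ) - 1) * α > 8 / p →
      Filter.Tendsto (fun n : ℕ =>
          ∑ a ∈ Finset.Icc 1 ⌊(n : ℝ) / Real.log n⌋₊,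
            (Nat.choose (n - 1) a : ℝ) *
              Real.exp (-((k : ℝ) - 1) * α * (a : ℝ) * Real.log n * p / 8))
        Filter.atTop (nhds 0)) := by
  refine ⟨?_, ?_, ?_⟩
  · -- counting bound
    intro n V _ _ hVcard T hT a ha _
    have hsub : (((Finset.univ : Finset (Finset V)).image
            (fun A => eBoundary A T.edgeFinset)).filter
          (fun S => S.card = a)) ⊆ T.edgeFinset.powersetCard a := by
      intro S hS
      rw [Finset.mem_filter] at hS
      obtain ⟨hS1, hS2⟩ := hS
      rw [Finset.mem_image] at hS1
      obtain ⟨A, -, rfl⟩ := hS1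
      refine Finset.mem_powersetCard.2 ⟨fun e he => ?_, hS2⟩
      simp only [eBoundary, Finset.mem_filter] at he
      exact he.1
    calc _ ≤ (T.edgeFinset.powersetCard a).card := Finset.card_le_card hsub
      _ = Nat.choose T.edgeFinset.card a := Finset.card_powersetCard _ _
      _ = Nat.choose (n - 1) a := by
          have hedge : T.edgeFinset.card = n - 1 := by
            have h := hT.card_edgeFinset
            rw [hVcard] at h
            omega
          rw [hedge]
  · -- sum domination
    intro n hn
    refine Finset.sum_le_sum fun a haI => ?_
    rw [Finset.mem_Icc] at haI
    have key := choose_le_exp_aux n a haI.1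
    calc (Nat.choose (n - 1) a : ℝ) *
            Real.exp (-((k : ℝ) - 1) * α * (a : ℝ) * Real.log n * p / 8)
        ≤ Real.exp ((a : ℝ) * (Real.log (Real.exp 1 / (a : ℝ)) + Real.log n)) *
            Real.exp (-((k : ℝ) - 1) * α * (a : ℝ) * Real.log n * p / 8) := by
          gcongr
      _ = Real.exp ((a : ℝ) * (Real.log (Real.exp 1 / (a : ℝ)) +
            Real.log n * (1 - ((k : ℝ) - 1) * α * p / 8))) := by
          rw [← Real.exp_add]
          congr 1
          ring
  · -- o(1)
    intro hk
    set K : ℝ := ((k : ℝ) - 1) * α * p / 8 with hK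
    have hK1 : 1 < K := by
      rw [hK]
      rw [gt_iff_lt, div_lt_iff₀ hp0] at hk
      nlinarith
    set r : ℕ → ℝ := fun n => Real.exp ((1 - K) * Real.log n) with hr
    have hrpos : ∀ n, 0 < r n := fun n => Real.exp_pos _
    -- r tends to 0
    have hrt : Filter.Tendsto r Filter.atTop (nhds 0) := by
      have h1 : Filter.Tendsto (fun n : ℕ => (1 - K) * Real.log n)
          Filter.atTop Filter.atBot := by
        have h2 : Filter.Tendsto (fun n : ℕ => Real.log n) Filter.atTop Filter.atTop :=
          Real.tendsto_log_atTop.comp tendsto_natCast_atTop_atTop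
        exact Filter.Tendsto.const_mul_atTop_of_neg (by linarith) h2
      exact Real.tendsto_exp_atBot.comp h1
    -- termwise bound: each term ≤ r n ^ a
    have hterm : ∀ n : ℕ, 1 ≤ n → ∀ a : ℕ, 1 ≤ a →
        (Nat.choose (n - 1) a : ℝ) *
            Real.exp (-((k : ℝ) - 1) * α * (a : ℝ) * Real.log n * p / 8) ≤ r n ^ a := by
      intro n hn a ha
      have hn0 : (0 : ℝ) < (n : ℝ) := by exact_mod_cast hn
      have h1 : (Nat.choose (n - 1) a : ℝ) ≤ (n : ℝ) ^ a := by
        calc (Nat.choose (n - 1) a : ℝ) ≤ ((n - 1 : ℕ) : ℝ) ^ a := by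
              exact_mod_cast Nat.choose_le_pow (n - 1) a
          _ ≤ (n : ℝ) ^ a := by
              gcongr
              exact_mod_cast Nat.sub_le n 1
      calc (Nat.choose (n - 1) a : ℝ) *
              Real.exp (-((k : ℝ) - 1) * α * (a : ℝ) * Real.log n * p / 8)
          ≤ (n : ℝ) ^ a *
              Real.exp (-((k : ℝ) - 1) * α * (a : ℝ) * Real.log n * p / 8) := by
            gcongr
        _ = r n ^ a := by
            have e1 : r n ^ a = Real.exp ((a : ℝ) * ((1 - K) * Real.log n)) :=
              (Real.exp_nat_mul _ a).symm
            have e2 : (n : ℝ) ^ a = Real.exp ((a : ℝ) * Real.log n) := by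
              rw [Real.exp_nat_mul, Real.exp_log hn0]
            rw [e2, ← Real.exp_add, e1]
            congr 1
            rw [hK]
            ring
    -- squeeze
    have hhalf : ∀ᶠ n : ℕ in Filter.atTop, r n ≤ 1 / 2 :=
      hrt.eventually (eventually_le_nhds (by norm_num))
    refine squeeze_zero' (g := fun n => 2 * r n) ?_ ?_ ?_
    · filter_upwards with n
      exact Finset.sum_nonneg fun a _ => by positivity
    · filter_upwards [hhalf, Filter.eventually_ge_atTop 1] with n hhn hn1
      calc ∑ a ∈ Finset.Icc 1 ⌊(n : ℝ) / Real.log n⌋₊,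
              (Nat.choose (n - 1) a : ℝ) *
                Real.exp (-((k : ℝ) - 1) * α * (a : ℝ) * Real.log n * p / 8)
          ≤ ∑ a ∈ Finset.Icc 1 ⌊(n : ℝ) / Real.log n⌋₊, r n * (1 / 2 : ℝ) ^ (a - 1) := by
            refine Finset.sum_le_sum fun a haI => ?_
            rw [Finset.mem_Icc] at haI
            refine (hterm n hn1 a haI.1).trans ?_
            have : r n ^ a = r n * r n ^ (a - 1) := by
              conv_lhs => rw [show a = (a - 1) + 1 by omega]
              rw [pow_succ]
              ring
            rw [this]
            exact mul_le_mul_of_nonneg_left (pow_le_pow_left₀ (hrpos n).le hhn _)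
              (hrpos n).le
        _ = r n * ∑ a ∈ Finset.Icc 1 ⌊(n : ℝ) / Real.log n⌋₊, (1 / 2 : ℝ) ^ (a - 1) := by
            rw [Finset.mul_sum]
        _ ≤ r n * 2 := by
            gcongr
            rw [← Finset.Ico_add_one_right_eq_Icc, Finset.sum_Ico_eq_sum_range]
            simp only [Nat.add_sub_cancel_left, Nat.add_sub_cancel]
            exact sum_geometric_two_le _
        _ = 2 * r n := by ring
    · have h2 := hrt.const_mul (2 : ℝ)
      simpa using h2
end
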